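/- For any x ∈ ℝ^{2m-1} with x_m = x_{m+1} = ⋯ = x_{2m-1} = 0, the convex function f_Nc satisfies f_Nc(x; m) - inf_{z ∈ ℝ^{2m-1}} f_Nc(z; m) ≥ 1/(16m). -/

import Mathlib

open scoped RealInnerProductSpace BigOperators

/-- Nesterov's chain quadratic `Q(x; ξ, m, ζ)` on `ℝ^{n+1}` (so `m = n+1 ≥ 1`). -/
noncomputable def Qfun {n : ℕ} (ξ ζ : ℝ) (x : EuclideanSpace ℝ (Fin (n + 1))) : ℝ :=
  ξ / 2 * (x 0 - 1) ^ 2 + 1 / 2 * ∑ t : Fin n, (x t.succ - x t.castSucc) ^ 2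
    + ζ / 2 * (x (Fin.last n)) ^ 2

/-- Nesterov's convex hard function `f_Nc(x; m) = (1/4)Q(x; 1, 2m-1, 1)` on `ℝ^{2m-1}`. -/
noncomputable def fNc (m : ℕ) (x : EuclideanSpace ℝ (Fin (2 * m - 2 + 1))) : ℝ :=
  1 / 4 * Qfun 1 1 x

lemma fNc_nonneg (m : ℕ) (x : EuclideanSpace ℝ (Fin (2 * m - 2 + 1))) : 0 ≤ fNc m x := by
  unfold fNc Qfun
  have : (0:ℝ) ≤ ∑ t : Fin (2 * m - 2), (x t.succ - x t.castSucc) ^ 2 :=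
    Finset.sum_nonneg fun i _ => sq_nonneg _
  positivity

lemma fNc_lower (m : ℕ) (hm : 1 ≤ m)
    (x : EuclideanSpace ℝ (Fin (2 * m - 2 + 1)))
    (hx : ∀ j : Fin (2 * m - 2 + 1), m - 1 ≤ (j : ℕ) → x j = 0) :
    1 / (8 * m) ≤ fNc m x := by
  have hm0 : (0:ℝ) < m := by exact_mod_cast hm
  set X : ℕ → ℝ := fun k =>
    if h : 1 ≤ k ∧ k ≤ 2 * m - 2 + 1 then x ⟨k - 1, by omega⟩ else if k = 0 then 1 else 0
    with hX
  have hX0 : X 0 = 1 := by simp [hX]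
  have hXk : ∀ k (hk : k ≤ 2 * m - 2), X (k + 1) = x ⟨k, by omega⟩ := by
    intro k hk
    simp only [hX]
    rw [dif_pos ⟨by omega, by omega⟩]
    simp
  have hXm : X m = 0 := by
    obtain ⟨k, rfl⟩ : ∃ k, m = k + 1 := ⟨m - 1, by omega⟩
    rw [hXk k (by omega)]
    exact hx _ (by simp only [Fin.val_mk]; omega)
  set d : ℕ → ℝ := fun k => X (k + 1) - X k with hd
  have htel : ∑ k ∈ Finset.range m, d k = -1 := by
    rw [Finset.sum_range_sub (f := X), hXm, hX0]; ring
  have hcauchy : 1 ≤ (m : ℝ) * ∑ k ∈ Finset.range m, d k ^ 2 := by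
    have := sq_sum_le_card_mul_sum_sq (s := Finset.range m) (f := d)
    rw [htel, Finset.card_range] at this
    simpa using this
  have hsum_ge : 1 / (m : ℝ) ≤ ∑ k ∈ Finset.range m, d k ^ 2 := by
    rw [div_le_iff₀ hm0]; linarith
  have hfirst : (x 0 - 1) ^ 2 = d 0 ^ 2 := by
    have h1 : X 1 = x ⟨0, by omega⟩ := hXk 0 (by omega)
    simp [hd, h1, hX0]
  have hS : ∑ t : Fin (2 * m - 2), (x t.succ - x t.castSucc) ^ 2
      = ∑ t ∈ Finset.range (2 * m - 2), d (t + 1) ^ 2 := by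
    rw [← Fin.sum_univ_eq_sum_range (fun t => d (t + 1) ^ 2) (2 * m - 2)]
    refine Finset.sum_congr rfl fun t _ => ?_
    have h1 : X (t + 1 + 1) = x ⟨(t : ℕ) + 1, by omega⟩ := hXk (t + 1) (by omega)
    have h2 : X (t + 1) = x ⟨(t : ℕ), by omega⟩ := hXk t (by omega)
    have e1 : x t.succ = x ⟨(t : ℕ) + 1, by omega⟩ := congrArg (fun j => x j) (Fin.ext (by simp))
    have e2 : x t.castSucc = x ⟨(t : ℕ), by omega⟩ := by
      exact congrArg (fun j => x j) (Fin.ext (by simp))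
    rw [e1, e2, hd]
    simp [h1, h2]
  have hsub : ∑ t ∈ Finset.range (m - 1), d (t + 1) ^ 2
      ≤ ∑ t ∈ Finset.range (2 * m - 2), d (t + 1) ^ 2 := by
    apply Finset.sum_le_sum_of_subset_of_nonneg
    · exact Finset.range_subset_range.mpr (by omega)
    · intro i _ _; positivity
  have hsplit : ∑ k ∈ Finset.range m, d k ^ 2
      = ∑ t ∈ Finset.range (m - 1), d (t + 1) ^ 2 + d 0 ^ 2 := by
    obtain ⟨k, hk⟩ : ∃ k, m = k + 1 := ⟨m - 1, by omega⟩
    rw [hk, Finset.sum_range_succ']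
    congr 2
    try omega
  have hlast : (0:ℝ) ≤ (x (Fin.last (2 * m - 2))) ^ 2 := sq_nonneg _
  have key : 1 / (2 * (m:ℝ)) ≤ 1 / 2 * ∑ k ∈ Finset.range m, d k ^ 2 := by
    rw [show (1:ℝ) / (2 * m) = 1 / 2 * (1 / m) by ring]
    linarith
  have hQ : 1 / (2 * (m:ℝ)) ≤ Qfun 1 1 x := by
    unfold Qfun
    rw [hfirst, hS]
    rw [hsplit] at key
    linarith
  unfold fNc
  rw [show (1:ℝ) / (8 * m) = 1 / 4 * (1 / (2 * m)) by ring]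
  linarith

lemma fNc_inf_le (m : ℕ) (hm : 1 ≤ m) :
    (⨅ z : EuclideanSpace ℝ (Fin (2 * m - 2 + 1)), fNc m z) ≤ 1 / (16 * m) := by
  have hm0 : (0:ℝ) < m := by exact_mod_cast hm
  set z : EuclideanSpace ℝ (Fin (2 * m - 2 + 1)) :=
    WithLp.toLp 2 (fun i => 1 - ((i : ℕ) + 1) / (2 * m) : Fin (2 * m - 2 + 1) → ℝ) with hz
  have hbdd : BddBelow (Set.range fun w : EuclideanSpace ℝ (Fin (2 * m - 2 + 1)) => fNc m w) :=
    ⟨0, by rintro _ ⟨w, rfl⟩; exact fNc_nonneg m w⟩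
  refine le_trans (ciInf_le hbdd z) ?_
  have hcast : ((2 * m - 2 : ℕ) : ℝ) = 2 * (m:ℝ) - 2 := by
    push_cast [Nat.cast_sub (by omega : 2 ≤ 2 * m)]; ring
  have hval : fNc m z = 1 / (16 * m) := by
    unfold fNc Qfun
    have h0 : z 0 = 1 - 1 / (2 * m) := by simp [hz]
    have hsum : ∑ t : Fin (2 * m - 2), (z t.succ - z t.castSucc) ^ 2
        = (2 * (m:ℝ) - 2) * (1 / (2 * m)) ^ 2 := by
      have hterm : ∀ t : Fin (2 * m - 2), (z t.succ - z t.castSucc) ^ 2 = (1 / (2 * m)) ^ 2 := by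
        intro t
        simp only [hz, WithLp.ofLp_toLp, Fin.val_succ, Fin.coe_castSucc]
        push_cast
        field_simp
        try ring
      rw [Finset.sum_congr rfl (fun t _ => hterm t)]
      rw [Finset.sum_const, Finset.card_univ, Fintype.card_fin, nsmul_eq_mul, hcast]
    have hlastv : z (Fin.last (2 * m - 2)) = 1 / (2 * m) := by
      simp only [hz, WithLp.ofLp_toLp, Fin.val_last]
      rw [hcast]
      field_simp
      ring
    rw [h0, hsum, hlastv]
    field_simp
    ring
  rw [hval]

/-- if the (1-indexed) coordinates `m, m+1, …, 2m-1` of `x` all vanish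
(0-indexed: all coordinates of index `≥ m-1`), then
`f_Nc(x; m) - inf f_Nc ≥ 1/(16m)`. -/
theorem fNc_lower_gap_of_tail_zero (m : ℕ) (hm : 1 ≤ m)
    (x : EuclideanSpace ℝ (Fin (2 * m - 2 + 1)))
    (hx : ∀ j : Fin (2 * m - 2 + 1), m - 1 ≤ (j : ℕ) → x j = 0) :
    fNc m x - ⨅ z : EuclideanSpace ℝ (Fin (2 * m - 2 + 1)), fNc m z ≥ 1 / (16 * m) := by
  have h1 := fNc_lower m hm x hx
  have h2 := fNc_inf_le m hm
  have hm0 : (0:ℝ) < m := by exact_mod_cast hm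
  have : 1 / (8 * (m:ℝ)) - 1 / (16 * m) = 1 / (16 * m) := by
    field_simp
    ring
  linarith
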